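/- For the system of independent r_j-random walks starting from every point of Ω_M, the variance of N_n(L) satisfies Var N_n(L) ∼ 2n M^L P(|ρ| > L) as L → ∞ (for fixed n ≥ 1). -/

import Mathlib

open MeasureTheory Filter
open scoped ENNReal NNReal BigOperators Topology

noncomputable section

/-- The hierarchical group of order `M`: finitely supported sequences with entries in `ZMod M`,
with componentwise addition mod `M`. -/
abbrev Omega (M : ℕ) := ℕ →₀ ZMod M

/-- The hierarchical norm: `|x| = max {i : x_i ≠ 0}` (coordinates indexed from 1), `|0| = 0`. -/
def hnorm {M : ℕ} (x : Omega M) : ℕ := x.support.sup (· + 1)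

instance {M : ℕ} : MeasurableSpace (Omega M) := ⊤

/-- The `n`-step distribution of the random walk with step distribution `ρ`, started at `0`. -/
def walk {M : ℕ} (ρ : PMF (Omega M)) : ℕ → PMF (Omega M)
  | 0 => PMF.pure 0
  | n + 1 => (walk ρ n).bind fun x => ρ.map (x + ·)

namespace NVA

variable {M : ℕ}

lemma hnorm_le_iff {x : Omega M} {L : ℕ} :
    hnorm x ≤ L ↔ ∀ i ∈ x.support, i < L := by
  simp only [hnorm, Finset.sup_le_iff]
  exact forall₂_congr fun i _ => by omega

/-- The ball of radius `L` is an additive subgroup. -/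
def ball (M L : ℕ) : AddSubgroup (Omega M) where
  carrier := {x | hnorm x ≤ L}
  zero_mem' := by simp [hnorm]
  add_mem' := by
    intro a b ha hb
    simp only [Set.mem_setOf_eq, hnorm_le_iff] at *
    intro i hi
    have := Finsupp.support_add (g₁ := a) (g₂ := b) hi
    rcases Finset.mem_union.1 this with h | h
    · exact ha i h
    · exact hb i h
  neg_mem' := by
    intro a ha
    simp only [Set.mem_setOf_eq, hnorm_le_iff] at *
    intro i hi
    exact ha i (by simpa using hi)

lemma mem_ball_iff {x : Omega M} {L : ℕ} : x ∈ ball M L ↔ hnorm x ≤ L := Iff.rfl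

/-- The ball is equivalent to functions on `range L`. -/
def ballEquiv (M L : ℕ) : ball M L ≃ (↥(Finset.range L : Set ℕ) → ZMod M) :=
  (Equiv.subtypeEquivRight (p := fun x : Omega M => x ∈ ball M L)
      (q := fun x : Omega M => ↑x.support ⊆ (Finset.range L : Set ℕ)) (fun x => by
        simp [mem_ball_iff, hnorm_le_iff, Set.subset_def])).trans <|
    (Finsupp.restrictSupportEquiv (Finset.range L : Set ℕ) (ZMod M)).trans
      (Finsupp.equivFunOnFinite)

lemma finite_ball (M L : ℕ) [NeZero M] : Finite (ball M L) :=
  Finite.of_equiv _ (ballEquiv M L).symm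

lemma card_ball (M L : ℕ) [NeZero M] : Nat.card (ball M L) = M ^ L := by
  rw [Nat.card_congr (ballEquiv M L)]
  rw [Nat.card_fun]
  simp [Nat.card_eq_fintype_card, ZMod.card _]

lemma fiber_equiv (B : AddSubgroup (Omega M)) (c : Omega M ⧸ B) :
    Nonempty ({u : Omega M // (QuotientAddGroup.mk u : Omega M ⧸ B) = c} ≃
      (B × ({c} : Set (Omega M ⧸ B)))) := by
  refine ⟨Equiv.trans (Equiv.subtypeEquivRight (q := fun u =>
      u ∈ (QuotientAddGroup.mk ⁻¹' ({c} : Set (Omega M ⧸ B)))) (by simp)) ?_⟩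
  exact QuotientAddGroup.preimageMkEquivAddSubgroupProdSet B {c}

lemma card_fiber (B : AddSubgroup (Omega M)) (c : Omega M ⧸ B) :
    Nat.card {u : Omega M // (QuotientAddGroup.mk u : Omega M ⧸ B) = c} = Nat.card B := by
  obtain ⟨e⟩ := fiber_equiv B c
  rw [Nat.card_congr e, Nat.card_prod]
  simp

lemma finite_fiber (B : AddSubgroup (Omega M)) [Finite B] (c : Omega M ⧸ B) :
    Finite {u : Omega M // (QuotientAddGroup.mk u : Omega M ⧸ B) = c} := by
  obtain ⟨e⟩ := fiber_equiv B c
  exact Finite.of_equiv _ e.symm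

lemma tsum_comp_mk (B : AddSubgroup (Omega M)) [Finite B] (G : Omega M ⧸ B → ℝ≥0∞) :
    ∑' u : Omega M, G (QuotientAddGroup.mk u) =
      ∑' c : Omega M ⧸ B, (Nat.card B : ℝ≥0∞) * G c := by
  rw [← (Equiv.sigmaFiberEquiv (QuotientAddGroup.mk : Omega M → Omega M ⧸ B)).tsum_eq
      (fun u => G (QuotientAddGroup.mk u))]
  rw [ENNReal.tsum_sigma']
  refine tsum_congr fun c => ?_
  have : ∀ (u : {u : Omega M // (QuotientAddGroup.mk u : Omega M ⧸ B) = c}),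
      G (QuotientAddGroup.mk (Equiv.sigmaFiberEquiv _ ⟨c, u⟩)) = G c := fun u => by
    simp [u.2]
  rw [tsum_congr this]
  haveI := finite_fiber B c
  haveI : Fintype {u : Omega M // (QuotientAddGroup.mk u : Omega M ⧸ B) = c} :=
    Fintype.ofFinite _
  rw [tsum_fintype]
  rw [Finset.sum_const]
  have hcard : (Finset.univ (α := {u : Omega M // (QuotientAddGroup.mk u : Omega M ⧸ B) = c})).card = Nat.card B := by
    rw [show (Finset.univ (α := {u : Omega M // (QuotientAddGroup.mk u : Omega M ⧸ B) = c})).card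
        = Fintype.card {u : Omega M // (QuotientAddGroup.mk u : Omega M ⧸ B) = c} from rfl,
      ← Nat.card_eq_fintype_card]
    exact card_fiber B c
  rw [hcard, nsmul_eq_mul]

lemma measSet {s : Set (Omega M)} : MeasurableSet s := MeasurableSpace.measurableSet_top

lemma measFun {α : Type*} [MeasurableSpace α] {f : Omega M → α} : Measurable f :=
  measurable_from_top

lemma pmf_tsum_subtype (p : PMF (Omega M)) (s : Set (Omega M)) :
    ∑' x : s, p x = p.toMeasure s := by
  rw [PMF.toMeasure_apply (hs := measSet), tsum_subtype]

lemma walk_succ_measure (ρ : PMF (Omega M)) (k : ℕ) (s : Set (Omega M)) :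
    (walk ρ (k + 1)).toMeasure s = ∑' x, walk ρ k x * ρ.toMeasure ((x + ·) ⁻¹' s) := by
  rw [show walk ρ (k+1) = (walk ρ k).bind fun x => ρ.map (x + ·) from rfl,
    PMF.toMeasure_bind_apply _ _ _ measSet]
  exact tsum_congr fun x => by rw [PMF.toMeasure_map_apply _ _ _ measFun measSet]

section Rec
variable (ρ : PMF (Omega M)) (B : AddSubgroup (Omega M))

lemma E_zero (h0 : (0 : Omega M) ∈ B) : (walk ρ 0).toMeasure (↑B)ᶜ = 0 := by
  rw [show walk ρ 0 = PMF.pure 0 from rfl, PMF.toMeasure_pure_apply _ _ measSet]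
  simp [h0]

lemma compl_meas (p : PMF (Omega M)) (s : Set (Omega M)) :
    p.toMeasure sᶜ = 1 - p.toMeasure s :=
  prob_compl_eq_one_sub measSet

lemma E_rec_le (k : ℕ) :
    (walk ρ (k + 1)).toMeasure (↑B)ᶜ ≤
      ρ.toMeasure (↑B)ᶜ + (walk ρ k).toMeasure (↑B)ᶜ := by
  classical
  set δ := ρ.toMeasure (↑B)ᶜ with hδ
  set w := walk ρ k with hw
  rw [walk_succ_measure]
  set m := fun x : Omega M => ρ.toMeasure ((x + ·) ⁻¹' (↑B)ᶜ) with hm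
  have split : ∑' x, w x * m x =
      (∑' x : (↑B : Set (Omega M)), w x * m x) + ∑' x : ↥(↑B : Set (Omega M))ᶜ, w x * m x :=
    (Summable.tsum_add_tsum_compl ENNReal.summable ENNReal.summable).symm
  rw [split]
  have hmB : ∀ x ∈ B, m x = δ := by
    intro x hx
    have key : (x + ·) ⁻¹' ((↑B : Set (Omega M))ᶜ) = (↑B : Set (Omega M))ᶜ := by
      ext y
      simp only [Set.mem_preimage, Set.mem_compl_iff, SetLike.mem_coe]
      constructor
      · exact fun h hy => h (B.add_mem hx hy)
      · exact fun h hxy => h (by simpa using B.add_mem (B.neg_mem hx) hxy)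
    rw [hm]; simp only [key]; exact hδ.symm
  have p1 : (∑' x : (↑B : Set (Omega M)), w x * m x) ≤ δ := by
    have : (∑' x : (↑B : Set (Omega M)), w x * m x) =
        (∑' x : (↑B : Set (Omega M)), w x) * δ := by
      rw [← ENNReal.tsum_mul_right]
      exact tsum_congr fun x => by rw [hmB x x.2]
    rw [this, pmf_tsum_subtype]
    calc w.toMeasure ↑B * δ ≤ 1 * δ := mul_le_mul_left prob_le_one δ
    _ = δ := one_mul δ
  have p2 : (∑' x : ↥(↑B : Set (Omega M))ᶜ, w x * m x) ≤ w.toMeasure (↑B)ᶜ := by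
    rw [← pmf_tsum_subtype]
    refine Summable.tsum_le_tsum (fun x => ?_) ENNReal.summable ENNReal.summable
    calc w x * m x ≤ w x * 1 := mul_le_mul_right prob_le_one _
    _ = w x := mul_one _
  exact add_le_add p1 p2

lemma E_rec_ge (k : ℕ) :
    ρ.toMeasure (↑B)ᶜ * (1 - (walk ρ k).toMeasure (↑B)ᶜ) +
      (1 - ρ.toMeasure (↑B)ᶜ) * (walk ρ k).toMeasure (↑B)ᶜ ≤
      (walk ρ (k + 1)).toMeasure (↑B)ᶜ := by
  classical
  set δ := ρ.toMeasure (↑B)ᶜ with hδ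
  set w := walk ρ k with hw
  rw [walk_succ_measure]
  set m := fun x : Omega M => ρ.toMeasure ((x + ·) ⁻¹' (↑B)ᶜ) with hm
  have split : ∑' x, w x * m x =
      (∑' x : (↑B : Set (Omega M)), w x * m x) + ∑' x : ↥(↑B : Set (Omega M))ᶜ, w x * m x :=
    (Summable.tsum_add_tsum_compl ENNReal.summable ENNReal.summable).symm
  rw [split]
  have hmB : ∀ x ∈ B, m x = δ := by
    intro x hx
    have key : (x + ·) ⁻¹' ((↑B : Set (Omega M))ᶜ) = (↑B : Set (Omega M))ᶜ := by
      ext y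
      simp only [Set.mem_preimage, Set.mem_compl_iff, SetLike.mem_coe]
      constructor
      · exact fun h hy => h (B.add_mem hx hy)
      · exact fun h hxy => h (by simpa using B.add_mem (B.neg_mem hx) hxy)
    rw [hm]; simp only [key]; exact hδ.symm
  have hmBc : ∀ x ∉ B, 1 - δ ≤ m x := by
    intro x hx
    have hsub : ((x + ·) ⁻¹' (↑B : Set (Omega M))) ⊆ (↑B : Set (Omega M))ᶜ := by
      intro y hy
      simp only [Set.mem_preimage, SetLike.mem_coe] at hy
      intro hyB
      exact hx (by simpa using B.add_mem hy (B.neg_mem hyB))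
    have hcompl : m x = 1 - ρ.toMeasure ((x + ·) ⁻¹' (↑B : Set (Omega M))) := by
      rw [hm]
      simp only []
      rw [show (x + ·) ⁻¹' ((↑B : Set (Omega M))ᶜ) = ((x + ·) ⁻¹' (↑B : Set (Omega M)))ᶜ
        from rfl, compl_meas]
    rw [hcompl]
    exact tsub_le_tsub_left (le_trans (measure_mono hsub) le_rfl) 1
  have p1 : δ * (1 - w.toMeasure (↑B)ᶜ) ≤ ∑' x : (↑B : Set (Omega M)), w x * m x := by
    have heq : (∑' x : (↑B : Set (Omega M)), w x * m x) =
        (∑' x : (↑B : Set (Omega M)), w x) * δ := by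
      rw [← ENNReal.tsum_mul_right]
      exact tsum_congr fun x => by rw [hmB x x.2]
    rw [heq, pmf_tsum_subtype]
    have : w.toMeasure ↑B = 1 - w.toMeasure (↑B)ᶜ := by
      rw [← compl_meas, compl_compl]
    rw [this, mul_comm]
  have p2 : (1 - δ) * w.toMeasure (↑B)ᶜ ≤ ∑' x : ↥(↑B : Set (Omega M))ᶜ, w x * m x := by
    rw [← pmf_tsum_subtype, ← ENNReal.tsum_mul_left]
    refine Summable.tsum_le_tsum (fun x => ?_) ENNReal.summable ENNReal.summable
    rw [mul_comm]
    exact mul_le_mul_right (hmBc x x.2) _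
  exact add_le_add p1 p2

lemma one_sub_ne_top {a : ℝ≥0∞} : (1 : ℝ≥0∞) - a ≠ ⊤ :=
  (lt_of_le_of_lt tsub_le_self ENNReal.one_lt_top).ne

lemma e_le_aux (h0 : (0 : Omega M) ∈ B) (k : ℕ) :
    ((walk ρ k).toMeasure (↑B)ᶜ).toReal ≤ k * (ρ.toMeasure (↑B)ᶜ).toReal := by
  induction k with
  | zero => simp [E_zero ρ B h0]
  | succ k ih =>
    have h1 := E_rec_le ρ B k
    have h2 := ENNReal.toReal_mono
      (ENNReal.add_ne_top.2 ⟨measure_ne_top _ _, measure_ne_top _ _⟩) h1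
    rw [ENNReal.toReal_add (measure_ne_top _ _) (measure_ne_top _ _)] at h2
    push_cast
    nlinarith [ENNReal.toReal_nonneg (a := ρ.toMeasure (↑B)ᶜ)]

lemma e_ge_aux (h0 : (0 : Omega M) ∈ B) (hd : (ρ.toMeasure (↑B)ᶜ).toReal ≤ 1 / 2) (k : ℕ) :
    k * (ρ.toMeasure (↑B)ᶜ).toReal - (k * (ρ.toMeasure (↑B)ᶜ).toReal) ^ 2 ≤
      ((walk ρ k).toMeasure (↑B)ᶜ).toReal := by
  set dr := (ρ.toMeasure (↑B)ᶜ).toReal with hdr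
  have hdr0 : 0 ≤ dr := ENNReal.toReal_nonneg
  induction k with
  | zero => simp [E_zero ρ B h0]
  | succ k ih =>
    have h1 := E_rec_ge ρ B k
    have h2 := ENNReal.toReal_mono (measure_ne_top _ _) h1
    have hEk1 : (walk ρ k).toMeasure (↑B)ᶜ ≤ 1 := prob_le_one
    have hδ1 : ρ.toMeasure (↑B)ᶜ ≤ 1 := prob_le_one
    rw [ENNReal.toReal_add (ENNReal.mul_ne_top (measure_ne_top _ _) one_sub_ne_top)
        (ENNReal.mul_ne_top one_sub_ne_top (measure_ne_top _ _)),
      ENNReal.toReal_mul, ENNReal.toReal_mul,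
      ENNReal.toReal_sub_of_le hEk1 ENNReal.one_ne_top,
      ENNReal.toReal_sub_of_le hδ1 ENNReal.one_ne_top, ENNReal.toReal_one] at h2
    set ek := ((walk ρ k).toMeasure (↑B)ᶜ).toReal with hek
    have h12 : 0 ≤ 1 - 2 * dr := by linarith
    push_cast
    nlinarith [mul_le_mul_of_nonneg_right ih h12,
      mul_nonneg (sq_nonneg (k : ℝ)) (mul_nonneg (mul_nonneg hdr0 hdr0) hdr0)]

end Rec

lemma T_bounds {Q : Type*} (g : Q → ℝ) (hg0 : ∀ c, 0 ≤ g c)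
    (hsum : Summable g) (htot : ∑' c, g c = 1) (c₀ : Q) :
    2 * (1 - g c₀) - 2 * (1 - g c₀) ^ 2 ≤ ∑' c, g c * (1 - g c) ∧
      ∑' c, g c * (1 - g c) ≤ 2 * (1 - g c₀) - (1 - g c₀) ^ 2 := by
  classical
  have hle1 : ∀ c, g c ≤ 1 := fun c =>
    htot ▸ Summable.le_tsum hsum c fun b _ => hg0 b
  have hsq : Summable fun c => g c ^ 2 := by
    refine Summable.of_nonneg_of_le (fun c => sq_nonneg _) (fun c => ?_) hsum
    calc g c ^ 2 = g c * g c := sq (g c) ▸ rfl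
    _ ≤ g c * 1 := mul_le_mul_of_nonneg_left (hle1 c) (hg0 c)
    _ = g c := mul_one _
  have hsplit : ∑' c, g c * (1 - g c) = 1 - ∑' c, g c ^ 2 := by
    rw [tsum_congr (fun c => show g c * (1 - g c) = g c - g c ^ 2 by ring),
      Summable.tsum_sub hsum hsq, htot]
  set a := g c₀ with ha
  set e := 1 - a with he
  set S := ∑' c, g c ^ 2 with hS
  have hSa : a ^ 2 ≤ S := Summable.le_tsum hsq c₀ fun b _ => sq_nonneg _
  have hpsum : Summable fun c => if c = c₀ then 0 else g c := by
    refine Summable.of_nonneg_of_le (fun c => ?_) (fun c => ?_) hsum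
    · split <;> simp [hg0]
    · split <;> simp [hg0, le_refl]
  have hpunct : ∑' c, (if c = c₀ then 0 else g c) = e := by
    have h := Summable.tsum_eq_add_tsum_ite hsum c₀
    rw [htot] at h
    rw [he, ha]; linarith
  have he0 : 0 ≤ e := by
    rw [← hpunct]
    exact tsum_nonneg fun c => by split <;> simp [hg0]
  have hgle : ∀ c, c ≠ c₀ → g c ≤ e := by
    intro c hc
    have h := Summable.le_tsum hpsum c fun b _ => by split <;> simp [hg0]
    rw [if_neg hc, hpunct] at h
    exact h
  have hSle : S ≤ a ^ 2 + e ^ 2 := by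
    have h := Summable.tsum_eq_add_tsum_ite hsq c₀
    have hbound : ∑' c, (if c = c₀ then 0 else g c ^ 2) ≤ e ^ 2 := by
      have hterm : ∀ c, (if c = c₀ then 0 else g c ^ 2) ≤
          (if c = c₀ then 0 else g c) * e := by
        intro c
        by_cases hc : c = c₀
        · simp [hc]
        · simp only [if_neg hc]
          calc g c ^ 2 = g c * g c := sq (g c) ▸ rfl
          _ ≤ g c * e := mul_le_mul_of_nonneg_left (hgle c hc) (hg0 c)
      calc ∑' c, (if c = c₀ then 0 else g c ^ 2)
          ≤ ∑' c, (if c = c₀ then 0 else g c) * e := by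
            refine Summable.tsum_le_tsum hterm ?_ (hpsum.mul_right e)
            exact Summable.of_nonneg_of_le
              (fun c => by split <;> simp [sq_nonneg]) hterm (hpsum.mul_right e)
        _ = (∑' c, (if c = c₀ then 0 else g c)) * e := tsum_mul_right
        _ = e * e := by rw [hpunct]
        _ = e ^ 2 := (sq e).symm
    rw [hS, h]
    have : a ^ 2 = g c₀ ^ 2 := by rw [ha]
    linarith
  constructor
  · rw [hsplit]; nlinarith
  · rw [hsplit]; nlinarith

lemma tsum_fibers [NeZero M] (p : PMF (Omega M)) (B : AddSubgroup (Omega M)) :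
    ∑' c : Omega M ⧸ B, p.toMeasure ((QuotientAddGroup.mk : Omega M → Omega M ⧸ B) ⁻¹' {c})
      = 1 := by
  haveI : Countable (ZMod M) := Finite.to_countable
  haveI : Countable (Omega M ⧸ B) := Quotient.countable
  have hdisj : Pairwise (Function.onFun Disjoint
      (fun c : Omega M ⧸ B => (QuotientAddGroup.mk : Omega M → Omega M ⧸ B) ⁻¹' {c})) := by
    intro c c' hne
    refine Set.disjoint_left.2 fun x h1 h2 => ?_
    simp only [Set.mem_preimage, Set.mem_singleton_iff] at h1 h2
    exact hne (h1 ▸ h2)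
  have huniv : ⋃ c : Omega M ⧸ B,
      ((QuotientAddGroup.mk : Omega M → Omega M ⧸ B) ⁻¹' {c}) = Set.univ := by
    ext x; simp
  rw [← measure_iUnion hdisj (fun _ => measSet), huniv, measure_univ]

lemma var_eq [NeZero M] (p : PMF (Omega M)) (L : ℕ) :
    (∑' u : Omega M, (p.toMeasure {x : Omega M | hnorm (u + x) ≤ L}).toReal *
        (1 - (p.toMeasure {x : Omega M | hnorm (u + x) ≤ L}).toReal)) =
      (M : ℝ) ^ L * ∑' c : Omega M ⧸ ball M L,
        (p.toMeasure ((QuotientAddGroup.mk : Omega M → Omega M ⧸ ball M L) ⁻¹' {c})).toReal *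
          (1 - (p.toMeasure
            ((QuotientAddGroup.mk : Omega M → Omega M ⧸ ball M L) ⁻¹' {c})).toReal) := by
  haveI : Finite (ball M L) := finite_ball M L
  set q : Omega M ⧸ ball M L → ℝ≥0∞ :=
    fun c => p.toMeasure ((QuotientAddGroup.mk : Omega M → Omega M ⧸ ball M L) ⁻¹' {c})
    with hqdef
  have hq1 : ∀ c, q c ≤ 1 := fun c => prob_le_one
  have hGfin : ∀ c, q c * (1 - q c) ≠ ⊤ := fun c =>
    ENNReal.mul_ne_top (lt_of_le_of_lt (hq1 c) ENNReal.one_lt_top).ne one_sub_ne_top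
  have hsetu : ∀ u : Omega M, {x : Omega M | hnorm (u + x) ≤ L} =
      (QuotientAddGroup.mk : Omega M → Omega M ⧸ ball M L) ⁻¹' {QuotientAddGroup.mk (-u)} := by
    intro u; ext x
    simp only [Set.mem_setOf_eq, Set.mem_preimage, Set.mem_singleton_iff]
    rw [QuotientAddGroup.eq, show -x + -u = -(u + x) by abel, neg_mem_iff]
    exact Iff.rfl
  have hGreal : ∀ c, (q c * (1 - q c)).toReal = (q c).toReal * (1 - (q c).toReal) := by
    intro c
    rw [ENNReal.toReal_mul, ENNReal.toReal_sub_of_le (hq1 c) ENNReal.one_ne_top,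
      ENNReal.toReal_one]
  have hterm : ∀ u : Omega M,
      (p.toMeasure {x : Omega M | hnorm (u + x) ≤ L}).toReal *
        (1 - (p.toMeasure {x : Omega M | hnorm (u + x) ≤ L}).toReal) =
      (q (QuotientAddGroup.mk (-u)) * (1 - q (QuotientAddGroup.mk (-u)))).toReal := by
    intro u
    rw [hsetu u, hGreal]
  calc (∑' u : Omega M, (p.toMeasure {x : Omega M | hnorm (u + x) ≤ L}).toReal *
        (1 - (p.toMeasure {x : Omega M | hnorm (u + x) ≤ L}).toReal))
      = ∑' u : Omega M, (q (QuotientAddGroup.mk (-u)) *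
          (1 - q (QuotientAddGroup.mk (-u)))).toReal := tsum_congr hterm
    _ = (∑' u : Omega M, q (QuotientAddGroup.mk (-u)) *
          (1 - q (QuotientAddGroup.mk (-u)))).toReal :=
        (ENNReal.tsum_toReal_eq fun u => hGfin _).symm
    _ = (∑' u : Omega M, q (QuotientAddGroup.mk u) * (1 - q (QuotientAddGroup.mk u))).toReal := by
        congr 1
        exact (Equiv.neg (Omega M)).tsum_eq
          (fun u => q (QuotientAddGroup.mk u) * (1 - q (QuotientAddGroup.mk u)))
    _ = (∑' c : Omega M ⧸ ball M L, (Nat.card (ball M L) : ℝ≥0∞) *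
          (q c * (1 - q c))).toReal := by
        rw [tsum_comp_mk (ball M L) (fun c => q c * (1 - q c))]
    _ = (M : ℝ) ^ L * ∑' c : Omega M ⧸ ball M L,
          (q c).toReal * (1 - (q c).toReal) := by
        rw [ENNReal.tsum_mul_left, ENNReal.toReal_mul, card_ball M L]
        congr 1
        · simp [ENNReal.toReal_pow]
        · rw [ENNReal.tsum_toReal_eq fun c => hGfin c]
          exact tsum_congr hGreal

end NVA

/-- `Var N_n(L) ∼ 2 n M^L P(|ρ| > L)` as `L → ∞`, for fixed `n ≥ 1`. Here
`Var N_n(L) = Σ_u p_n^u(L) (1 - p_n^u(L))` with `p_n^u(L) = P(u + ξ_n ∈ B_L)`. -/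
theorem number_variance_asymptotics (M : ℕ) (hM : 2 ≤ M) (r : ℕ → ℝ≥0∞)
    (hr : ∑' j : ℕ, r (j + 1) = 1)
    (ρ : PMF (Omega M)) (hρ0 : ρ 0 = 0)
    (hρ : ∀ y : Omega M, y ≠ 0 →
      ρ y = r (hnorm y) / ((M : ℝ≥0∞) ^ (hnorm y - 1) * ((M : ℝ≥0∞) - 1)))
    (hpos : ∀ L : ℕ, ρ.toMeasure {y : Omega M | L < hnorm y} ≠ 0)
    (n : ℕ) (hn : 1 ≤ n) :
    Tendsto (fun L : ℕ =>
        (∑' u : Omega M,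
            ((walk ρ n).toMeasure {x : Omega M | hnorm (u + x) ≤ L}).toReal *
              (1 - ((walk ρ n).toMeasure {x : Omega M | hnorm (u + x) ≤ L}).toReal)) /
          (2 * (n : ℝ) * (M : ℝ) ^ L * (ρ.toMeasure {y : Omega M | L < hnorm y}).toReal))
      atTop (nhds 1) := by
  classical
  haveI : NeZero M := ⟨by omega⟩
  haveI : Countable (ZMod M) := Finite.to_countable
  have h0mem : ∀ L : ℕ, (0 : Omega M) ∈ NVA.ball M L := fun L => by
    simp [NVA.mem_ball_iff, hnorm]
  have hcompl : ∀ L : ℕ, {y : Omega M | L < hnorm y} = (↑(NVA.ball M L) : Set (Omega M))ᶜ := by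
    intro L; ext y
    simp only [Set.mem_setOf_eq, Set.mem_compl_iff, SetLike.mem_coe, NVA.mem_ball_iff, not_le]
  -- the single-step escape probability
  have hd0 : ∀ L : ℕ, 0 < (ρ.toMeasure {y : Omega M | L < hnorm y}).toReal := fun L =>
    ENNReal.toReal_pos (hpos L) (measure_ne_top _ _)
  have hdlim : Tendsto (fun L : ℕ => (ρ.toMeasure {y : Omega M | L < hnorm y}).toReal)
      atTop (𝓝 0) := by
    have hmono : Antitone fun L : ℕ => {y : Omega M | L < hnorm y} := fun i j hij y hy =>
      lt_of_le_of_lt hij hy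
    have hint : ⋂ L : ℕ, {y : Omega M | L < hnorm y} = (∅ : Set (Omega M)) := by
      ext y
      simp only [Set.mem_iInter, Set.mem_setOf_eq, Set.mem_empty_iff_false, iff_false,
        not_forall, not_lt]
      exact ⟨hnorm y, le_rfl⟩
    have h := tendsto_measure_iInter_atTop (μ := ρ.toMeasure)
      (fun L => (NVA.measSet).nullMeasurableSet) hmono ⟨0, measure_ne_top _ _⟩
    rw [hint, measure_empty] at h
    have h2 := (ENNReal.tendsto_toReal (a := 0) (by simp)).comp h
    exact h2
  -- eventually the escape probability is small
  have hnpos : (0 : ℝ) < n := by exact_mod_cast hn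
  have hsmall : ∀ᶠ L : ℕ in atTop,
      (ρ.toMeasure {y : Omega M | L < hnorm y}).toReal ≤ 1 / (2 * n) := by
    have : (0 : ℝ) < 1 / (2 * n) := by positivity
    exact hdlim.eventually (eventually_le_nhds this)
  -- squeeze
  have hlow : Tendsto (fun L : ℕ =>
      (1 - n * (ρ.toMeasure {y : Omega M | L < hnorm y}).toReal) ^ 2) atTop (𝓝 1) := by
    have h1 : Tendsto (fun L : ℕ =>
        1 - (n : ℝ) * (ρ.toMeasure {y : Omega M | L < hnorm y}).toReal) atTop (𝓝 1) := by
      have := (tendsto_const_nhds (x := (1 : ℝ)) (f := atTop (α := ℕ))).sub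
        (hdlim.const_mul (n : ℝ))
      simpa using this
    have := h1.pow 2
    simpa using this
  refine tendsto_of_tendsto_of_tendsto_of_le_of_le' hlow tendsto_const_nhds ?_ ?_
  -- both eventual bounds
  all_goals {
    filter_upwards [hsmall] with L hL
    set d : ℝ := (ρ.toMeasure {y : Omega M | L < hnorm y}).toReal with hdd
    set e : ℝ := ((walk ρ n).toMeasure (↑(NVA.ball M L) : Set (Omega M))ᶜ).toReal with hee
    have hdle : d ≤ 1 / 2 := by
      have hn1 : (1 : ℝ) ≤ n := by exact_mod_cast hn
      have h2n : (1 : ℝ) / (2 * n) ≤ 1 / 2 := by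
        rw [div_le_div_iff₀ (by positivity) (by norm_num)]
        nlinarith
      exact hL.trans h2n
    have hde2 : n * d ≤ 1 / 2 := by
      rw [hdd]
      calc (n : ℝ) * (ρ.toMeasure {y : Omega M | L < hnorm y}).toReal ≤ n * (1 / (2 * n)) :=
        mul_le_mul_of_nonneg_left hL (by positivity)
      _ = 1 / 2 := by field_simp
    have he_le : e ≤ n * d := by
      rw [hee, hdd, hcompl L]
      exact NVA.e_le_aux ρ (NVA.ball M L) (h0mem L) n
    have he_ge : n * d - (n * d) ^ 2 ≤ e := by
      rw [hee, hdd, hcompl L]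
      exact NVA.e_ge_aux ρ (NVA.ball M L) (h0mem L) (by rw [← hcompl L]; exact hdle) n
    have he0 : 0 ≤ e := ENNReal.toReal_nonneg
    have hd0' : 0 < d := hd0 L
    -- T bounds
    set g : Omega M ⧸ NVA.ball M L → ℝ := fun c =>
      ((walk ρ n).toMeasure
        ((QuotientAddGroup.mk : Omega M → Omega M ⧸ NVA.ball M L) ⁻¹' {c})).toReal with hgg
    have hg0 : ∀ c, 0 ≤ g c := fun c => ENNReal.toReal_nonneg
    have hgsum : Summable g := ENNReal.summable_toReal
      (by rw [NVA.tsum_fibers]; exact ENNReal.one_ne_top)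
    have hgtot : ∑' c, g c = 1 := by
      rw [hgg, ← ENNReal.tsum_toReal_eq fun c => measure_ne_top _ _,
        NVA.tsum_fibers (walk ρ n) (NVA.ball M L)]
      simp
    have hg00 : g 0 = 1 - e := by
      have hpre : ((QuotientAddGroup.mk : Omega M → Omega M ⧸ NVA.ball M L) ⁻¹' {0}) =
          (↑(NVA.ball M L) : Set (Omega M)) := by
        ext x
        simp only [Set.mem_preimage, Set.mem_singleton_iff, SetLike.mem_coe]
        exact QuotientAddGroup.eq_zero_iff x
      rw [hgg]
      simp only [hpre]
      rw [show (↑(NVA.ball M L) : Set (Omega M)) = ((↑(NVA.ball M L) : Set (Omega M))ᶜ)ᶜ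
        from (compl_compl _).symm, NVA.compl_meas,
        ENNReal.toReal_sub_of_le prob_le_one ENNReal.one_ne_top, ENNReal.toReal_one, hee]
    obtain ⟨hT1, hT2⟩ := NVA.T_bounds g hg0 hgsum hgtot 0
    rw [hg00] at hT1 hT2
    have h1me : 1 - (1 - e) = e := by ring
    rw [h1me] at hT1 hT2
    -- rewrite the variance
    have hvar := NVA.var_eq (walk ρ n) L
    have hgT : (∑' c : Omega M ⧸ NVA.ball M L, g c * (1 - g c)) =
        ∑' c : Omega M ⧸ NVA.ball M L,
          ((walk ρ n).toMeasure
            ((QuotientAddGroup.mk : Omega M → Omega M ⧸ NVA.ball M L) ⁻¹' {c})).toReal *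
          (1 - ((walk ρ n).toMeasure
            ((QuotientAddGroup.mk : Omega M → Omega M ⧸ NVA.ball M L) ⁻¹' {c})).toReal) := rfl
    set T : ℝ := ∑' c : Omega M ⧸ NVA.ball M L, g c * (1 - g c) with hTT
    have hML : (0 : ℝ) < (M : ℝ) ^ L := by positivity
    have hvar' : (∑' u : Omega M,
        ((walk ρ n).toMeasure {x : Omega M | hnorm (u + x) ≤ L}).toReal *
          (1 - ((walk ρ n).toMeasure {x : Omega M | hnorm (u + x) ≤ L}).toReal)) =
        (M : ℝ) ^ L * T := hvar
    rw [hvar']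
    have hden : (0 : ℝ) < 2 * n * (M : ℝ) ^ L * d := by positivity
    first
    | -- lower bound goal
      ( rw [le_div_iff₀ hden]
        have key : (1 - n * d) ^ 2 * (2 * n * d) ≤ T := by
          nlinarith [mul_nonneg (sub_nonneg.2 he_ge) (sub_nonneg.2 he_le),
            mul_nonneg (sub_nonneg.2 he_ge) (sq_nonneg (1 - n * d)),
            mul_nonneg (mul_nonneg (mul_nonneg hnpos.le hd0'.le)
              (by nlinarith : (0:ℝ) ≤ 1 - n * d)) (sq_nonneg (n * d)),
            sq_nonneg (1 - n * d), hd0'.le, hnpos.le]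
        calc (1 - n * d) ^ 2 * (2 * n * (M : ℝ) ^ L * d)
            = (M : ℝ) ^ L * ((1 - n * d) ^ 2 * (2 * n * d)) := by ring
          _ ≤ (M : ℝ) ^ L * T := mul_le_mul_of_nonneg_left key hML.le )
    | -- upper bound goal
      ( rw [div_le_one hden]
        have key : T ≤ 2 * n * d := by nlinarith
        calc (M : ℝ) ^ L * T ≤ (M : ℝ) ^ L * (2 * n * d) :=
            mul_le_mul_of_nonneg_left key hML.le
          _ = 2 * n * (M : ℝ) ^ L * d := by ring )
  }
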